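/- The one-parameter family g_t ∈ GL(3, ℂ) given by g_t(e₁) = t·e₁, g_t(e₂) = t²·e₂, g_t(e₃) = e₃ contracts μ₁ to μ₄: for all x, y, lim_{t→0} g_t^{-1}(μ₁(g_t(x), g_t(y))) = μ₄(x,y), where μ₄ has the only nonzero basis product μ₄(e₁,e₁) = e₂. -/

import Mathlib

open Filter

/-- `μ₁` on `ℂ³`: `μ₁(e₁,e₁) = e₂`, `μ₁(e₂,e₁) = e₃`, other basis products zero. -/
def mu1 (x y : Fin 3 → ℂ) : Fin 3 → ℂ :=
  (x 0 * y 0) • (Pi.single 1 1 : Fin 3 → ℂ) + (x 1 * y 0) • (Pi.single 2 1 : Fin 3 → ℂ)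

/-- `μ₄` on `ℂ³`: the only nonzero basis product is `μ₄(e₁,e₁) = e₂`. -/
def mu4 (x y : Fin 3 → ℂ) : Fin 3 → ℂ :=
  (x 0 * y 0) • (Pi.single 1 1 : Fin 3 → ℂ)

/-- The family `g_t`: `g_t(e₁) = t·e₁`, `g_t(e₂) = t²·e₂`, `g_t(e₃) = e₃`. -/
def gt' (t : ℂ) (v : Fin 3 → ℂ) : Fin 3 → ℂ :=
  ![t * v 0, t ^ 2 * v 1, v 2]

/-- The inverse of `g_t` (for `t ≠ 0`). -/
noncomputable def gtInv (t : ℂ) (w : Fin 3 → ℂ) : Fin 3 → ℂ :=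
  ![w 0 / t, w 1 / t ^ 2, w 2]

/-- The family `g_t` contracts `μ₁` to `μ₄`:
`lim_{t→0} g_t⁻¹(μ₁(g_t(x), g_t(y))) = μ₄(x,y)` for all `x, y`. -/
theorem stmt_12 :
    ∀ x y : Fin 3 → ℂ,
      Tendsto (fun t : ℂ => gtInv t (mu1 (gt' t x) (gt' t y)))
        (nhdsWithin 0 {0}ᶜ) (nhds (mu4 x y)) := by
  intro x y
  have hcong : ∀ t ∈ ({0}ᶜ : Set ℂ),
      gtInv t (mu1 (gt' t x) (gt' t y))
        = (fun t : ℂ => (![0, x 0 * y 0, t ^ 3 * (x 1 * y 0)] : Fin 3 → ℂ)) t := by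
    intro t ht
    simp only [Set.mem_compl_iff, Set.mem_singleton_iff] at ht
    funext i
    fin_cases i <;>
      simp [gtInv, mu1, gt', Pi.single_apply, ht] <;> field_simp <;> ring
  have hval : mu4 x y = (![0, x 0 * y 0, (0:ℂ) ^ 3 * (x 1 * y 0)] : Fin 3 → ℂ) := by
    funext i
    fin_cases i <;> simp [mu4, Pi.single_apply]
  rw [tendsto_congr' (eventually_nhdsWithin_of_forall hcong), hval]
  apply ContinuousWithinAt.tendsto
  apply Continuous.continuousWithinAt
  refine continuous_pi fun i => ?_
  fin_cases i <;> simp <;> fun_prop
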